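/- Let G be a finitely generated almost simple group which contains a distortion element, and let H be a normal subgroup of G. Then every group homomorphism ψ : H → ℝ (to the additive reals) is trivial. -/

import Mathlib

/-- The word length of `g` with respect to a generating set `S`. -/
noncomputable def wordLength {G : Type*} [Group G] (S : Set G) (g : G) : ℕ :=
  sInf {n : ℕ | ∃ w : Fin n → G, (∀ i, w i ∈ S ∨ (w i)⁻¹ ∈ S) ∧ (List.ofFn w).prod = g}

/-- `f` is a distortion element with respect to the generating set `S`. -/
def IsDistortionElement {G : Type*} [Group G] (S : Set G) (f : G) : Prop :=
  ¬ IsOfFinOrder f ∧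
    Filter.liminf (fun n : ℕ => (wordLength S (f ^ n) : ℝ) / n) Filter.atTop = 0

/-- A group is almost simple if every normal subgroup is finite or of finite index. -/
def AlmostSimple (G : Type*) [Group G] : Prop :=
  ∀ N : Subgroup G, N.Normal → (N : Set G).Finite ∨ N.FiniteIndex

section auxWord

variable {G : Type*} [Group G] (S : Set G)

lemma wordLength_le_list {g : G} {l : List G}
    (hl : ∀ x ∈ l, x ∈ S ∨ x⁻¹ ∈ S) (hp : l.prod = g) :
    wordLength S g ≤ l.length := by
  apply Nat.sInf_le
  exact ⟨l.get, fun i => hl _ (l.get_mem i), by rw [List.ofFn_get]; exact hp⟩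

lemma exists_word (hSgen : Subgroup.closure S = ⊤) (g : G) :
    ∃ l : List G, (∀ x ∈ l, x ∈ S ∨ x⁻¹ ∈ S) ∧ l.prod = g := by
  have hg : g ∈ Subgroup.closure S := hSgen ▸ Subgroup.mem_top g
  induction hg using Subgroup.closure_induction with
  | mem x hx => exact ⟨[x], by simpa using Or.inl hx, by simp⟩
  | one => exact ⟨[], by simp, by simp⟩
  | mul x y _ _ hx hy =>
    obtain ⟨lx, hlx, hpx⟩ := hx
    obtain ⟨ly, hly, hpy⟩ := hy
    exact ⟨lx ++ ly, by
      intro z hz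
      rcases List.mem_append.mp hz with h | h
      exacts [hlx z h, hly z h], by rw [List.prod_append, hpx, hpy]⟩
  | inv x _ hx =>
    obtain ⟨l, hl, hp⟩ := hx
    refine ⟨(l.map fun x => x⁻¹).reverse, ?_, by rw [← List.prod_inv_reverse, hp]⟩
    intro z hz
    rw [List.mem_reverse, List.mem_map] at hz
    obtain ⟨y, hy, rfl⟩ := hz
    rcases hl y hy with h | h
    · exact Or.inr (by simpa using h)
    · exact Or.inl h

lemma exists_min_word (hSgen : Subgroup.closure S = ⊤) (g : G) :
    ∃ l : List G, (∀ x ∈ l, x ∈ S ∨ x⁻¹ ∈ S) ∧ l.prod = g ∧ l.length = wordLength S g := by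
  have hne : {n : ℕ | ∃ w : Fin n → G, (∀ i, w i ∈ S ∨ (w i)⁻¹ ∈ S) ∧
      (List.ofFn w).prod = g}.Nonempty := by
    obtain ⟨l, hl, hp⟩ := exists_word S hSgen g
    exact ⟨l.length, l.get, fun i => hl _ (l.get_mem i), by rw [List.ofFn_get]; exact hp⟩
  obtain ⟨w, hw, hp⟩ : ∃ w : Fin (wordLength S g) → G,
      (∀ i, w i ∈ S ∨ (w i)⁻¹ ∈ S) ∧ (List.ofFn w).prod = g := Nat.sInf_mem hne
  refine ⟨List.ofFn w, ?_, hp, by simp [List.length_ofFn]⟩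
  intro x hx
  obtain ⟨i, rfl⟩ := List.mem_ofFn.mp hx
  exact hw i

lemma wordLength_mul_le (hSgen : Subgroup.closure S = ⊤) (a b : G) :
    wordLength S (a * b) ≤ wordLength S a + wordLength S b := by
  obtain ⟨la, h1a, h2a, h3a⟩ := exists_min_word S hSgen a
  obtain ⟨lb, h1b, h2b, h3b⟩ := exists_min_word S hSgen b
  have := wordLength_le_list S (g := a * b) (l := la ++ lb)
    (by intro z hz; rcases List.mem_append.mp hz with h | h; exacts [h1a z h, h1b z h])
    (by rw [List.prod_append, h2a, h2b])
  simpa [h3a, h3b] using this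

lemma wordLength_pow_le (hSgen : Subgroup.closure S = ⊤) (a : G) (k : ℕ) :
    wordLength S (a ^ k) ≤ k * wordLength S a := by
  induction k with
  | zero =>
    have := wordLength_le_list S (g := a ^ 0) (l := []) (by simp) (by simp [pow_zero])
    simpa using this
  | succ n ih =>
    calc wordLength S (a ^ (n + 1)) = wordLength S (a ^ n * a) := by rw [pow_succ]
    _ ≤ wordLength S (a ^ n) + wordLength S a := wordLength_mul_le S hSgen _ _
    _ ≤ n * wordLength S a + wordLength S a := by omega
    _ = (n + 1) * wordLength S a := by ring

/-- Schreier-type bound: an additive function on a finite-index normal subgroup grows at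
most linearly in the ambient word length. -/
lemma schreier_bound (hSfin : S.Finite) (hSgen : Subgroup.closure S = ⊤)
    (H : Subgroup G) [H.Normal] (hidx : H.index ≠ 0)
    (χ : G → ℝ) (hadd : ∀ x y, x ∈ H → y ∈ H → χ (x * y) = χ x + χ y) :
    ∃ M C₀ : ℝ, 0 ≤ M ∧ ∀ h ∈ H, |χ h| ≤ M * wordLength S h + C₀ := by
  haveI hQfin : Finite (G ⧸ H) := by
    rw [Subgroup.index] at hidx
    exact (Nat.card_ne_zero.mp hidx).2
  -- coset representatives
  set r : G → G := fun x => ((x : G ⧸ H)).out with hr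
  have hmk : ∀ x : G, ((r x : G) : G ⧸ H) = (x : G ⧸ H) := fun x => QuotientGroup.out_eq' _
  set a : G → G := fun x => (r x)⁻¹ * x with ha
  have hamem : ∀ x : G, a x ∈ H := fun x => QuotientGroup.eq.mp (hmk x)
  -- the finite set of Schreier elements and a bound for χ on it
  set Sbar : Set G := S ∪ {x | x⁻¹ ∈ S} with hSbar
  have hSbarfin : Sbar.Finite :=
    hSfin.union (Set.Finite.preimage (Set.injOn_of_injective inv_injective) hSfin)
  set D : Set ℝ :=
    (fun p : (G ⧸ H) × G × (G ⧸ H) => |χ (p.1.out⁻¹ * (p.2.1 * p.2.2.out))|) ''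
      (Set.univ ×ˢ (Sbar ×ˢ Set.univ)) with hD
  have hDfin : D.Finite :=
    ((Set.finite_univ.prod (hSbarfin.prod Set.finite_univ))).image _
  obtain ⟨M, hM⟩ := hDfin.bddAbove
  set M' : ℝ := max M 0 with hM'
  have hM'_bound : ∀ q₁ : G ⧸ H, ∀ s ∈ Sbar, ∀ q₂ : G ⧸ H,
      |χ (q₁.out⁻¹ * (s * q₂.out))| ≤ M' := by
    intro q₁ s hs q₂
    have : |χ (q₁.out⁻¹ * (s * q₂.out))| ∈ D :=
      ⟨(q₁, s, q₂), ⟨Set.mem_univ _, hs, Set.mem_univ _⟩, rfl⟩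
    exact le_max_of_le_left (hM this)
  -- the key induction
  have key : ∀ l : List G, (∀ x ∈ l, x ∈ Sbar) →
      |χ (a l.prod)| ≤ M' * l.length + |χ (a 1)| := by
    intro l
    induction l with
    | nil => intro _; simp
    | cons s t ih =>
      intro hmem
      have hs : s ∈ Sbar := hmem s List.mem_cons_self
      have ht : ∀ x ∈ t, x ∈ Sbar := fun x hx => hmem x (List.mem_cons_of_mem s hx)
      set f : G := ((s * t.prod : G) : G ⧸ H).out⁻¹ * (s * ((t.prod : G) : G ⧸ H).out) with hf
      have hfact : a (s :: t).prod = f * a t.prod := by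
        simp only [List.prod_cons, ha, hf, hr]
        group
      have hfH : f ∈ H := by
        have h1 : (((s * t.prod : G) : G ⧸ H).out : G ⧸ H) =
            ((s * ((t.prod : G) : G ⧸ H).out : G) : G ⧸ H) := by
          rw [hmk (s * t.prod), QuotientGroup.mk_mul, QuotientGroup.mk_mul, hmk]
        exact QuotientGroup.eq.mp h1
      have hbound : |χ f| ≤ M' := hM'_bound _ s hs _
      have hχ : χ (a (s :: t).prod) = χ f + χ (a t.prod) := by
        rw [hfact]; exact hadd f _ hfH (hamem _)
      calc |χ (a (s :: t).prod)| = |χ f + χ (a t.prod)| := by rw [hχ]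
      _ ≤ |χ f| + |χ (a t.prod)| := abs_add_le _ _
      _ ≤ M' + (M' * t.length + |χ (a 1)|) := add_le_add hbound (ih ht)
      _ = M' * (s :: t).length + |χ (a 1)| := by
          simp [List.length_cons]; ring
  -- assemble
  set e : G := ((1 : G ⧸ H)).out with he
  have heH : e ∈ H := by
    have : ((e : G) : G ⧸ H) = 1 := QuotientGroup.out_eq' _
    exact (QuotientGroup.eq_one_iff e).mp this
  refine ⟨M', M' * 0 + |χ (a 1)| + |χ e|, le_max_right M 0, ?_⟩
  intro h hh
  obtain ⟨l, hl, hp, hlen⟩ := exists_min_word S hSgen h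
  have hlS : ∀ x ∈ l, x ∈ Sbar := by
    intro x hx
    rcases hl x hx with h1 | h1
    exacts [Or.inl h1, Or.inr h1]
  have hrh : r h = e := by
    show ((h : G ⧸ H)).out = e
    rw [(QuotientGroup.eq_one_iff h).mpr hh]
  have hdecomp : h = e * a h := by
    show h = e * ((r h)⁻¹ * h)
    rw [hrh]
    group
  have hχh : χ h = χ e + χ (a h) := by
    have h2 := hadd e (a h) heH (hamem h)
    rw [← hdecomp] at h2
    exact h2
  have hbound := key l hlS
  rw [hp, hlen] at hbound
  calc |χ h| = |χ e + χ (a h)| := by rw [hχh]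
  _ ≤ |χ e| + |χ (a h)| := abs_add_le _ _
  _ ≤ |χ e| + (M' * wordLength S h + |χ (a 1)|) := by linarith
  _ = M' * wordLength S h + (M' * 0 + |χ (a 1)| + |χ e|) := by ring

end auxWord

section auxChi

variable {G : Type*} [Group G] (H : Subgroup G) (hH : H.Normal)
  (ψ : H →* Multiplicative ℝ) (g : G)

open Classical in
/-- The real-valued function `x ↦ ψ (g x g⁻¹)` on a normal subgroup (extended by `0`). -/
noncomputable def chiFun : G → ℝ := fun x =>
  if hx : x ∈ H then (ψ ⟨g * x * g⁻¹, hH.conj_mem x hx g⟩).toAdd else 0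

lemma chiFun_add : ∀ x y : G, x ∈ H → y ∈ H →
    chiFun H hH ψ g (x * y) = chiFun H hH ψ g x + chiFun H hH ψ g y := by
  intro x y hx hy
  rw [chiFun, chiFun, chiFun]
  rw [dif_pos (H.mul_mem hx hy), dif_pos hx, dif_pos hy]
  have key : (⟨g * (x * y) * g⁻¹, hH.conj_mem _ (H.mul_mem hx hy) g⟩ : H) =
      ⟨g * x * g⁻¹, hH.conj_mem x hx g⟩ * ⟨g * y * g⁻¹, hH.conj_mem y hy g⟩ := by
    ext
    simp only [Subgroup.coe_mul]
    group
  rw [key, map_mul, toAdd_mul]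

lemma chiFun_pow (x : G) (hx : x ∈ H) (n : ℕ) :
    chiFun H hH ψ g (x ^ n) = n * chiFun H hH ψ g x := by
  induction n with
  | zero =>
    have h1 : chiFun H hH ψ g 1 = 0 := by
      have := chiFun_add H hH ψ g 1 1 H.one_mem H.one_mem
      simp only [mul_one] at this
      linarith
    simpa using h1
  | succ k ih =>
    rw [pow_succ, chiFun_add H hH ψ g _ _ (H.pow_mem hx k) hx, ih]
    push_cast
    ring

lemma chiFun_ne (x : G) (hx : x ∈ H) (hnot : ¬ g * x * g⁻¹ ∈ (ψ.ker).map H.subtype) :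
    chiFun H hH ψ g x ≠ 0 := by
  rw [chiFun, dif_pos hx]
  intro h0
  apply hnot
  refine ⟨⟨g * x * g⁻¹, hH.conj_mem x hx g⟩, ?_, rfl⟩
  exact (toAdd_eq_zero.mp h0 : _)

end auxChi

/-- If `G` is a finitely generated almost simple group containing a distortion
element, and `H` is a normal subgroup of `G`, then every homomorphism from `H` to
the additive group `ℝ` is trivial. -/
theorem no_real_homomorphism_from_normal_subgroup {G : Type*} [Group G]
    (S : Set G) (hSfin : S.Finite) (hSgen : Subgroup.closure S = ⊤)
    (hAS : AlmostSimple G)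
    (u : G) (hdist : IsDistortionElement S u)
    (H : Subgroup G) (hH : H.Normal)
    (ψ : H →* Multiplicative ℝ) :
    ∀ h : H, ψ h = 1 := by
  intro h₀
  obtain ⟨hu_tor, hu_lim⟩ := hdist
  -- if the kernel of ψ has finite index in H, we are done
  have kerindex : ψ.ker.index ≠ 0 → ψ h₀ = 1 := by
    intro hki
    haveI : ψ.ker.FiniteIndex := ⟨hki⟩
    have hmem : h₀ ^ (ψ.ker).index ∈ ψ.ker := Subgroup.pow_index_mem _ _
    have hpow : (ψ h₀) ^ (ψ.ker).index = 1 := by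
      rw [← map_pow]; exact hmem
    have h1 := congrArg Multiplicative.toAdd hpow
    rw [toAdd_pow, nsmul_eq_mul] at h1
    have hc : ((ψ.ker.index : ℝ)) ≠ 0 := by exact_mod_cast hki
    have h0 : (ψ h₀).toAdd = 0 := (mul_eq_zero.mp h1).resolve_left hc
    calc ψ h₀ = Multiplicative.ofAdd (ψ h₀).toAdd := rfl
    _ = Multiplicative.ofAdd 0 := by rw [h0]
    _ = 1 := rfl
  rcases hAS H hH with hHfin | hHidx
  · -- H finite
    haveI : Finite H := hHfin.to_subtype
    exact kerindex Subgroup.index_ne_zero_of_finite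
  -- H of finite index
  haveI : H.FiniteIndex := hHidx
  set K : Subgroup G := ((ψ.ker).map H.subtype).normalCore with hK
  haveI hKnormal : K.Normal := Subgroup.normalCore_normal _
  rcases hAS K hKnormal with hKfin | hKidx
  · -- K finite : the main case
    set m : ℕ := H.index with hm
    have hm0 : m ≠ 0 := hHidx.index_ne_zero
    have hum : u ^ m ∈ H := H.pow_index_mem u
    by_cases huK : u ^ m ∈ K
    · -- then u would have finite order
      exfalso
      haveI : Finite K := hKfin.to_subtype
      haveI : Nonempty K := ⟨1⟩
      have h1 : (⟨u ^ m, huK⟩ : K) ^ (Nat.card K) = 1 := pow_card_eq_one'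
      have h2 : u ^ (m * Nat.card K) = 1 := by
        have := congrArg (fun x : K => (x : G)) h1
        simp only [SubgroupClass.coe_pow, OneMemClass.coe_one] at this
        rwa [pow_mul]
      have hN : Nat.card K ≠ 0 := Nat.card_pos.ne'
      exact hu_tor (isOfFinOrder_iff_pow_eq_one.mpr
        ⟨m * Nat.card K, Nat.pos_of_ne_zero (by positivity), h2⟩)
    · -- u^m has a conjugate outside the kernel: distortion contradiction
      exfalso
      have hg : ∃ g : G, ¬ g * u ^ m * g⁻¹ ∈ (ψ.ker).map H.subtype := by
        by_contra hc
        push_neg at hc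
        exact huK hc
      obtain ⟨g, hg⟩ := hg
      set χ : G → ℝ := chiFun H hH ψ g with hχ
      obtain ⟨M, C₀, hM0, hbound⟩ := schreier_bound S hSfin hSgen H hHidx.index_ne_zero χ
        (chiFun_add H hH ψ g)
      set c : ℝ := |χ (u ^ m)| with hcdef
      have hc : 0 < c := abs_pos.mpr (chiFun_ne H hH ψ g (u ^ m) hum hg)
      -- the key linear lower bound
      have key : ∀ n : ℕ, c * n ≤ M * (m * wordLength S (u ^ n)) + C₀ := by
        intro n
        have hmem : u ^ (m * n) ∈ H := by
          rw [pow_mul]; exact H.pow_mem hum n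
        have h1 : |χ (u ^ (m * n))| = c * n := by
          rw [pow_mul, hχ, chiFun_pow H hH ψ g (u ^ m) hum n, ← hχ, abs_mul, Nat.abs_cast,
            ← hcdef]
          ring
        have h2 : |χ (u ^ (m * n))| ≤ M * wordLength S (u ^ (m * n)) + C₀ :=
          hbound _ hmem
        have h3 : wordLength S (u ^ (m * n)) ≤ m * wordLength S (u ^ n) := by
          have : u ^ (m * n) = (u ^ n) ^ m := by rw [← pow_mul, mul_comm]
          rw [this]
          exact wordLength_pow_le S hSgen (u ^ n) m
        have h4 : (M : ℝ) * wordLength S (u ^ (m * n)) ≤ M * (m * wordLength S (u ^ n)) := by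
          apply mul_le_mul_of_nonneg_left _ hM0
          exact_mod_cast h3
        calc c * n = |χ (u ^ (m * n))| := h1.symm
        _ ≤ M * wordLength S (u ^ (m * n)) + C₀ := h2
        _ ≤ M * (m * wordLength S (u ^ n)) + C₀ := by linarith
      -- event lower bound for the liminf sequence
      have hmR : (0 : ℝ) < m := by
        exact_mod_cast Nat.pos_of_ne_zero hm0
      set δ : ℝ := c / (2 * (M + 1) * m) with hδ
      have hδpos : 0 < δ := by
        apply div_pos hc
        positivity
      have hev : ∀ᶠ n : ℕ in Filter.atTop,
          δ ≤ (wordLength S (u ^ n) : ℝ) / n := by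
        filter_upwards [Filter.eventually_ge_atTop (max 1 ⌈2 * C₀ / c⌉₊)] with n hn
        have hn1 : 1 ≤ n := le_trans (le_max_left _ _) hn
        have hnR : (0 : ℝ) < n := by exact_mod_cast hn1
        have hceil : (2 * C₀ / c : ℝ) ≤ n := by
          have := le_trans (le_max_right 1 ⌈2 * C₀ / c⌉₊) hn
          exact_mod_cast Nat.ceil_le.mp this
        have hC₀ : C₀ ≤ c * n / 2 := by
          rw [div_le_iff₀ hc] at hceil
          linarith
        set w : ℝ := (wordLength S (u ^ n) : ℝ) with hw
        have hw0 : 0 ≤ w := by positivity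
        have hkey := key n
        have h5 : M * (m * w) ≤ (M + 1) * (m * w) := by nlinarith
        have h6 : c * n ≤ 2 * ((M + 1) * (m * w)) := by linarith
        rw [hδ, div_le_div_iff₀ (by positivity) hnR]
        nlinarith
      -- contradiction with liminf = 0
      have hBdd : BddAbove {a : ℝ | ∀ᶠ n : ℕ in Filter.atTop,
          a ≤ (wordLength S (u ^ n) : ℝ) / n} := by
        refine ⟨(wordLength S u : ℝ), ?_⟩
        intro a ha
        obtain ⟨n, hn1, hn2⟩ := (ha.and (Filter.eventually_ge_atTop 1)).exists
        have hnR : (0 : ℝ) < n := by exact_mod_cast hn2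
        have h7 : (wordLength S (u ^ n) : ℝ) ≤ n * wordLength S u := by
          exact_mod_cast wordLength_pow_le S hSgen u n
        have h8 : (wordLength S (u ^ n) : ℝ) / n ≤ wordLength S u := by
          rw [div_le_iff₀ hnR]
          linarith
        linarith
      have hfin : δ ≤ 0 := by
        rw [← hu_lim, Filter.liminf_eq]
        exact le_csSup hBdd hev
      linarith
  · -- K of finite index
    apply kerindex
    haveI := hKidx
    have hle : K.subgroupOf H ≤ ψ.ker := by
      intro x hx
      have hx' : (x : G) ∈ (ψ.ker).map H.subtype :=
        Subgroup.normalCore_le _ (hx : (x : G) ∈ K)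
      obtain ⟨y, hy, hyx⟩ := hx'
      have : y = x := Subtype.ext hyx
      rwa [← this]
    have h1 : ψ.ker.index ∣ (K.subgroupOf H).index := Subgroup.index_dvd_of_le hle
    have h2 : (K.subgroupOf H).index = K.relIndex H := rfl
    have h3 : K.relIndex H ∣ K.index := Subgroup.relIndex_dvd_index_of_normal K H
    have h4 : K.index ≠ 0 := Subgroup.FiniteIndex.index_ne_zero
    intro h0
    rw [h0] at h1
    have h5 : (K.subgroupOf H).index = 0 := zero_dvd_iff.mp h1
    rw [h2] at h5
    rw [h5] at h3
    exact h4 (zero_dvd_iff.mp h3)
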